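/- The span of the eight vector fields Z₁,…,Z₈ (as in the equivalence algebra of the 2-Hessian equation) is closed under Lie bracket, i.e. it forms an 8-dimensional Lie algebra of vector fields on ℝ⁴. -/

import Mathlib

/-- Vector fields on ℝ⁴ with coordinates (x, y, z, f). -/
abbrev VF : Type := (Fin 4 → ℝ) → Fin 4 → ℝ

/-- Lie bracket of vector fields: [X,Y]ᵢ = Σⱼ (Xⱼ ∂ⱼYᵢ − Yⱼ ∂ⱼXᵢ). -/
noncomputable def lie (X Y : VF) : VF := fun p i =>
  ∑ j, (X p j * fderiv ℝ (fun q => Y q i) p (Pi.single j 1)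
    - Y p j * fderiv ℝ (fun q => X q i) p (Pi.single j 1))

noncomputable def Z₁ : VF := fun _ => ![1, 0, 0, 0]
noncomputable def Z₂ : VF := fun _ => ![0, 1, 0, 0]
noncomputable def Z₃ : VF := fun _ => ![0, 0, 1, 0]
noncomputable def Z₄ : VF := fun p => ![p 2, 0, -p 0, 0]
noncomputable def Z₅ : VF := fun p => ![p 1, -p 0, 0, 0]
noncomputable def Z₆ : VF := fun p => ![0, p 2, -p 1, 0]
noncomputable def Z₇ : VF := fun p => ![0, 0, 0, 2 * p 3]
noncomputable def Z₈ : VF := fun p => ![p 0, p 1, p 2, -4 * p 3]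

@[simp] lemma vec4_two {α : Type*} (a b c d : α) : ![a,b,c,d] 2 = c := rfl
@[simp] lemma vec4_three {α : Type*} (a b c d : α) : ![a,b,c,d] 3 = d := rfl
@[simp] lemma vec8_four {α : Type*} (a b c d e f g h : α) : ![a,b,c,d,e,f,g,h] 4 = e := rfl
@[simp] lemma vec8_five {α : Type*} (a b c d e f g h : α) : ![a,b,c,d,e,f,g,h] 5 = f := rfl
@[simp] lemma vec8_six {α : Type*} (a b c d e f g h : α) : ![a,b,c,d,e,f,g,h] 6 = g := rfl
@[simp] lemma vec8_seven {α : Type*} (a b c d e f g h : α) : ![a,b,c,d,e,f,g,h] 7 = h := rfl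

/-- The linear part of a general element of the span. -/
def Amat (c : Fin 8 → ℝ) : Fin 4 → Fin 4 → ℝ :=
  ![![c 7, c 4, c 3, 0], ![-c 4, c 7, c 5, 0], ![-c 3, -c 5, c 7, 0],
    ![0, 0, 0, 2 * c 6 - 4 * c 7]]

/-- The constant part. -/
def bvec (c : Fin 8 → ℝ) : Fin 4 → ℝ := ![c 0, c 1, c 2, 0]

/-- General element of the span. -/
noncomputable def W (c : Fin 8 → ℝ) : VF := fun p i => bvec c i + ∑ k, Amat c i k * p k

lemma fderiv_W (c : Fin 8 → ℝ) (i : Fin 4) (p : Fin 4 → ℝ) (j : Fin 4) :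
    fderiv ℝ (fun q => W c q i) p (Pi.single j 1) = Amat c i j := by
  have h : HasFDerivAt (fun q : Fin 4 → ℝ => W c q i)
      (∑ k, Amat c i k • (ContinuousLinearMap.proj k : (Fin 4 → ℝ) →L[ℝ] ℝ)) p :=
    (HasFDerivAt.fun_sum fun k _ =>
      ((ContinuousLinearMap.proj k : (Fin 4 → ℝ) →L[ℝ] ℝ).hasFDerivAt).const_mul _).const_add _
  rw [h.fderiv]
  simp [ContinuousLinearMap.proj_apply, Pi.single_apply, mul_ite]

/-- Structure coefficients of the bracket. -/
def ebra (c d : Fin 8 → ℝ) : Fin 8 → ℝ :=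
  ![d 7 * c 0 + d 4 * c 1 + d 3 * c 2 - (c 7 * d 0 + c 4 * d 1 + c 3 * d 2),
    -d 4 * c 0 + d 7 * c 1 + d 5 * c 2 - (-c 4 * d 0 + c 7 * d 1 + c 5 * d 2),
    -d 3 * c 0 - d 5 * c 1 + d 7 * c 2 - (-c 3 * d 0 - c 5 * d 1 + c 7 * d 2),
    c 5 * d 4 - c 4 * d 5,
    c 3 * d 5 - c 5 * d 3,
    c 4 * d 3 - c 3 * d 4,
    0, 0]

lemma lie_W (c d : Fin 8 → ℝ) : lie (W c) (W d) = W (ebra c d) := by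
  funext p i
  simp only [lie, fderiv_W]
  fin_cases i <;>
    simp [W, Amat, bvec, ebra, Fin.sum_univ_four] <;> ring

noncomputable def v : Fin 8 → VF := ![Z₁, Z₂, Z₃, Z₄, Z₅, Z₆, Z₇, Z₈]

lemma sum_eq_W (c : Fin 8 → ℝ) : ∑ i, c i • v i = W c := by
  funext p j
  simp only [Fin.sum_univ_eight, v, Matrix.cons_val_zero, Matrix.cons_val_one, Matrix.head_cons,
    vec8_four, vec8_five, vec8_six, vec8_seven, Matrix.cons_val_two, Matrix.cons_val_three,
    Matrix.tail_cons, Pi.add_apply, Pi.smul_apply, smul_eq_mul]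
  fin_cases j <;>
    simp [Z₁, Z₂, Z₃, Z₄, Z₅, Z₆, Z₇, Z₈, W, Amat, bvec, Fin.sum_univ_four] <;> ring

lemma range_v : Set.range v = ({Z₁, Z₂, Z₃, Z₄, Z₅, Z₆, Z₇, Z₈} : Set VF) := by
  ext x
  constructor
  · rintro ⟨i, rfl⟩
    fin_cases i <;> simp [v]
  · rintro (rfl | rfl | rfl | rfl | rfl | rfl | rfl | rfl)
    exacts [⟨0, rfl⟩, ⟨1, rfl⟩, ⟨2, rfl⟩, ⟨3, rfl⟩, ⟨4, rfl⟩, ⟨5, rfl⟩, ⟨6, rfl⟩, ⟨7, rfl⟩]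

lemma W_mem (c : Fin 8 → ℝ) :
    W c ∈ Submodule.span ℝ ({Z₁, Z₂, Z₃, Z₄, Z₅, Z₆, Z₇, Z₈} : Set VF) := by
  rw [← sum_eq_W, ← range_v]
  exact Submodule.sum_mem _ fun i _ =>
    Submodule.smul_mem _ _ (Submodule.subset_span ⟨i, rfl⟩)

lemma W_add (c d : Fin 8 → ℝ) : W c + W d = W (c + d) := by
  funext p i
  fin_cases i <;> simp [W, Amat, bvec, Fin.sum_univ_four] <;> ring

lemma W_smul (a : ℝ) (c : Fin 8 → ℝ) : a • W c = W (a • c) := by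
  funext p i
  fin_cases i <;> simp [W, Amat, bvec, Fin.sum_univ_four] <;> ring

lemma mem_W {X : VF}
    (hX : X ∈ Submodule.span ℝ ({Z₁, Z₂, Z₃, Z₄, Z₅, Z₆, Z₇, Z₈} : Set VF)) :
    ∃ c, X = W c := by
  induction hX using Submodule.span_induction with
  | mem x hx =>
    rcases hx with rfl | rfl | rfl | rfl | rfl | rfl | rfl | rfl
    · exact ⟨![1,0,0,0,0,0,0,0], by funext p i; fin_cases i <;>
        simp [Z₁, W, Matrix.vecHead, Matrix.vecTail, Amat, bvec, Fin.sum_univ_four]⟩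
    · exact ⟨![0,1,0,0,0,0,0,0], by funext p i; fin_cases i <;>
        simp [Z₂, W, Matrix.vecHead, Matrix.vecTail, Amat, bvec, Fin.sum_univ_four]⟩
    · exact ⟨![0,0,1,0,0,0,0,0], by funext p i; fin_cases i <;>
        simp [Z₃, W, Matrix.vecHead, Matrix.vecTail, Amat, bvec, Fin.sum_univ_four]⟩
    · exact ⟨![0,0,0,1,0,0,0,0], by funext p i; fin_cases i <;>
        simp [Z₄, W, Matrix.vecHead, Matrix.vecTail, Amat, bvec, Fin.sum_univ_four]⟩
    · exact ⟨![0,0,0,0,1,0,0,0], by funext p i; fin_cases i <;>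
        simp [Z₅, W, Matrix.vecHead, Matrix.vecTail, Amat, bvec, Fin.sum_univ_four]⟩
    · exact ⟨![0,0,0,0,0,1,0,0], by funext p i; fin_cases i <;>
        simp [Z₆, W, Matrix.vecHead, Matrix.vecTail, Amat, bvec, Fin.sum_univ_four]⟩
    · exact ⟨![0,0,0,0,0,0,1,0], by funext p i; fin_cases i <;>
        simp [Z₇, W, Matrix.vecHead, Matrix.vecTail, Amat, bvec, Fin.sum_univ_four]⟩
    · exact ⟨![0,0,0,0,0,0,0,1], by funext p i; fin_cases i <;>
        simp [Z₈, W, Matrix.vecHead, Matrix.vecTail, Amat, bvec, Fin.sum_univ_four]⟩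
  | zero =>
    refine ⟨0, ?_⟩
    funext p i
    fin_cases i <;> simp [W, Matrix.vecHead, Matrix.vecTail, Amat, bvec, Fin.sum_univ_four]
  | add x y _ _ hx hy =>
    obtain ⟨cx, rfl⟩ := hx; obtain ⟨cy, rfl⟩ := hy
    exact ⟨cx + cy, W_add cx cy⟩
  | smul a x _ hx =>
    obtain ⟨cx, rfl⟩ := hx
    exact ⟨a • cx, W_smul a cx⟩

lemma li_v : LinearIndependent ℝ v := by
  rw [Fintype.linearIndependent_iff]
  intro g hg
  rw [sum_eq_W] at hg
  have h : ∀ p i, W g p i = 0 := fun p i => congrFun (congrFun hg p) i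
  have h00 := h 0 0; have h01 := h 0 1; have h02 := h 0 2
  have h10 := h ![1,0,0,0] 0; have h11 := h ![1,0,0,0] 1; have h12 := h ![1,0,0,0] 2
  have h22 := h ![0,1,0,0] 2
  have h33 := h ![0,0,0,1] 3
  simp [W, Amat, bvec, Fin.sum_univ_four] at h00 h01 h02 h10 h11 h12 h22 h33
  intro i
  fin_cases i <;> simp <;> linarith

theorem stmt10 :
    (∀ X Y : VF, X ∈ Submodule.span ℝ ({Z₁, Z₂, Z₃, Z₄, Z₅, Z₆, Z₇, Z₈} : Set VF) →
      Y ∈ Submodule.span ℝ ({Z₁, Z₂, Z₃, Z₄, Z₅, Z₆, Z₇, Z₈} : Set VF) →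
      lie X Y ∈ Submodule.span ℝ ({Z₁, Z₂, Z₃, Z₄, Z₅, Z₆, Z₇, Z₈} : Set VF)) ∧
    Module.finrank ℝ (Submodule.span ℝ ({Z₁, Z₂, Z₃, Z₄, Z₅, Z₆, Z₇, Z₈} : Set VF)) = 8 := by
  constructor
  · intro X Y hX hY
    obtain ⟨c, rfl⟩ := mem_W hX
    obtain ⟨d, rfl⟩ := mem_W hY
    rw [lie_W]
    exact W_mem _
  · rw [← range_v, finrank_span_eq_card li_v]
    simp
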